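/- Let m ∈ ℕ, M ≥ 0, T > 0, define coefficients c_{i,j} by c_{0,0}=1, c_{0,j}=c_{i,0}=0 for i,j≠0, and c_{i,j} = ((j−1)c_{i,j−1} + i·c_{i−1,j−1})/j. Let f: ℝ → ℝ be m+1 times differentiable with |f^{(m+1)}| ≤ M, and define divided differences g_{1,k+1} = f(kT), g_{i+1,k+1} = (g_{i,k+1} − g_{i,k})/T. Then for all integers k ≥ m and all i = 1,…,m: |f^{(i)}(kT) − Σ_{j=i}^{m} T^{j−i}·c_{i,j}·g_{j+1,k+1}| ≤ c_{i,m+1}·M·T^{m+1−i}. -/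

import Mathlib

open Polynomial Finset

/-- Output coefficients of the implicit robust exact differentiator. -/
noncomputable def ired_c : ℕ → ℕ → ℝ
  | 0, 0 => 1
  | 0, _ + 1 => 0
  | _ + 1, 0 => 0
  | i + 1, j + 1 => ((j : ℝ) * ired_c (i + 1) j + ((i : ℝ) + 1) * ired_c i j) / ((j : ℝ) + 1)

namespace IRED


noncomputable def wp (j : ℕ) : ℝ[X] := C ((j.factorial : ℝ)⁻¹) * ∏ p ∈ range j, (X + C (p : ℝ))

lemma wp_natDegree_le (j : ℕ) : (wp j).natDegree ≤ j := by
  refine le_trans (natDegree_C_mul_le _ _) (le_trans (natDegree_prod_le _ _) ?_)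
  calc ∑ p ∈ range j, (X + C (p : ℝ)).natDegree ≤ ∑ _p ∈ range j, 1 := by
        exact Finset.sum_le_sum fun p _ => le_of_eq (natDegree_X_add_C _)
    _ = j := by simp

lemma iter_deriv_mul_linear (a : ℝ) : ∀ (i : ℕ) (R : ℝ[X]),
    derivative^[i + 1] (R * (X + C a)) =
      derivative^[i + 1] R * (X + C a) + C ((i : ℝ) + 1) * derivative^[i] R := by
  intro i
  induction i with
  | zero =>
    intro R
    simp [derivative_mul]
  | succ n ih =>
    intro R
    rw [Function.iterate_succ_apply, derivative_mul]
    have h1 : derivative (X + C a) = 1 := by simp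
    rw [h1, mul_one]
    have hadd : derivative^[n + 1] (derivative R * (X + C a) + R)
        = derivative^[n + 1] (derivative R * (X + C a)) + derivative^[n + 1] R := by
      simp only [← Module.End.pow_apply, map_add]
    have h2 : ((n + 1 : ℕ) : ℝ) + 1 = ((n : ℝ) + 1) + 1 := by push_cast; ring
    rw [hadd, ih (derivative R)]
    conv_rhs => rw [h2, C_add, C_1]
    rw [← Function.iterate_succ_apply derivative (n + 1) R,
      ← Function.iterate_succ_apply derivative n R]
    ring

lemma wp_succ (j : ℕ) :
    wp (j + 1) = C (((j : ℝ) + 1)⁻¹) * (wp j * (X + C (j : ℝ))) := by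
  unfold wp
  rw [Finset.prod_range_succ]
  have h1 : ((j + 1).factorial : ℝ)⁻¹ = ((j : ℝ) + 1)⁻¹ * ((j.factorial : ℝ))⁻¹ := by
    rw [Nat.factorial_succ]
    push_cast
    rw [mul_inv]
  rw [h1, C_mul]
  ring

lemma eval_iter_wp : ∀ (j i : ℕ), (derivative^[i] (wp j)).eval 0 = ired_c i j := by
  intro j
  induction j with
  | zero =>
    intro i
    cases i with
    | zero => simp [wp, ired_c]
    | succ n =>
      have : (wp 0).natDegree < n + 1 := by
        have := wp_natDegree_le 0; omega
      rw [iterate_derivative_eq_zero this]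
      simp [ired_c]
  | succ j ih =>
    intro i
    cases i with
    | zero =>
      show (wp (j + 1)).eval 0 = ired_c 0 (j + 1)
      have : (wp (j + 1)).eval 0 = 0 := by
        unfold wp
        rw [eval_mul, eval_prod]
        have : ∏ p ∈ range (j + 1), ((X + C (p : ℝ)).eval 0) = 0 := by
          apply Finset.prod_eq_zero (Finset.mem_range.mpr (Nat.succ_pos j))
          simp
        rw [this, mul_zero]
      rw [this]
      simp [ired_c]
    | succ n =>
      rw [wp_succ, iterate_derivative_C_mul, iter_deriv_mul_linear]
      rw [eval_mul, eval_C, eval_add, eval_mul, eval_add, eval_X, eval_C, eval_mul, eval_C,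
        ih (n + 1), ih n]
      show ((j : ℝ) + 1)⁻¹ * (ired_c (n + 1) j * ((0 : ℝ) + j) + ((n : ℝ) + 1) * ired_c n j)
          = ired_c (n + 1) (j + 1)
      rw [show ired_c (n + 1) (j + 1)
          = ((j : ℝ) * ired_c (n + 1) j + ((n : ℝ) + 1) * ired_c n j) / ((j : ℝ) + 1) from rfl]
      rw [div_eq_mul_inv]
      ring

lemma ired_c_zero_of_lt {i j : ℕ} (h : j < i) : ired_c i j = 0 := by
  rw [← eval_iter_wp, iterate_derivative_eq_zero (lt_of_le_of_lt (wp_natDegree_le j) h)]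
  simp

lemma ired_c_nonneg : ∀ j i, 0 ≤ ired_c i j := by
  intro j
  induction j with
  | zero => intro i; cases i <;> simp [ired_c]
  | succ j ih =>
    intro i
    cases i with
    | zero => simp [ired_c]
    | succ n =>
      show 0 ≤ ((j : ℝ) * ired_c (n + 1) j + ((n : ℝ) + 1) * ired_c n j) / ((j : ℝ) + 1)
      apply div_nonneg
      · have := ih (n + 1); have := ih n; positivity
      · positivity

lemma ired_c_pos : ∀ j i, 1 ≤ i → i ≤ j → 0 < ired_c i j := by
  intro j
  induction j with
  | zero => intro i h1 h2; omega
  | succ j ih =>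
    intro i h1 h2
    cases i with
    | zero => omega
    | succ n =>
      show 0 < ((j : ℝ) * ired_c (n + 1) j + ((n : ℝ) + 1) * ired_c n j) / ((j : ℝ) + 1)
      apply div_pos _ (by positivity)
      cases n with
      | zero =>
        cases j with
        | zero => norm_num [ired_c]
        | succ jj =>
          have hp : 0 < ired_c 1 (jj + 1) := ih 1 le_rfl (by omega)
          have h0 : ired_c 0 (jj + 1) = 0 := by simp [ired_c]
          rw [h0]
          push_cast
          nlinarith
      | succ nn =>
        have hp : 0 < ired_c (nn + 1) j := ih (nn + 1) (by omega) (by omega)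
        have hnn : 0 ≤ ired_c (nn + 2) j := ired_c_nonneg j (nn + 2)
        have hj : (0 : ℝ) ≤ (j : ℝ) := by positivity
        nlinarith



lemma wp_eval_neg_of_lt {p j : ℕ} (h : p < j) : (wp j).eval (-(p : ℝ)) = 0 := by
  unfold wp
  rw [eval_mul, eval_prod]
  have : ∏ q ∈ range j, ((X + C (q : ℝ)).eval (-(p : ℝ))) = 0 := by
    apply Finset.prod_eq_zero (Finset.mem_range.mpr h)
    simp
  rw [this, mul_zero]

lemma wp_eval_neg_of_le {p j : ℕ} (h : j ≤ p) :
    (wp j).eval (-(p : ℝ)) = (-1 : ℝ) ^ j * (p.choose j) := by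
  unfold wp
  rw [eval_mul, eval_prod, eval_C]
  have h1 : ∀ q ∈ range j, (X + C (q : ℝ)).eval (-(p : ℝ)) = -(((p - q : ℕ) : ℝ)) := by
    intro q hq
    have hq' : q ≤ p := le_trans (le_of_lt (mem_range.mp hq)) h
    rw [eval_add, eval_X, eval_C, Nat.cast_sub hq']
    ring
  rw [Finset.prod_congr rfl h1]
  have h2 : ∏ x ∈ range j, -(((p - x : ℕ)) : ℝ)
      = (-1 : ℝ) ^ j * ∏ x ∈ range j, (((p - x : ℕ)) : ℝ) := by
    calc ∏ x ∈ range j, -(((p - x : ℕ)) : ℝ)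
        = ∏ x ∈ range j, ((-1 : ℝ) * ((p - x : ℕ) : ℝ)) :=
          Finset.prod_congr rfl fun x _ => by ring
      _ = (∏ _x ∈ range j, (-1 : ℝ)) * ∏ x ∈ range j, ((p - x : ℕ) : ℝ) :=
          Finset.prod_mul_distrib
      _ = (-1 : ℝ) ^ j * ∏ x ∈ range j, ((p - x : ℕ) : ℝ) := by
          rw [Finset.prod_const, card_range]
  have h3 : ∏ x ∈ range j, ((p - x : ℕ) : ℝ) = (j.factorial : ℝ) * (p.choose j : ℝ) := by
    rw [← Nat.cast_prod, ← Nat.descFactorial_eq_prod_range,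
      Nat.descFactorial_eq_factorial_mul_choose]
    push_cast
    ring
  rw [h2, h3]
  have hj : (j.factorial : ℝ) ≠ 0 := by positivity
  field_simp



lemma alt_sum_choose_real (n : ℕ) :
    ∑ d ∈ range (n + 1), (-1 : ℝ) ^ d * (n.choose d) = if n = 0 then 1 else 0 := by
  have h1 := Int.alternating_sum_range_choose (n := n)
  have h2 : ((∑ d ∈ range (n + 1), (-1 : ℤ) ^ d * (n.choose d) : ℤ) : ℝ)
      = ∑ d ∈ range (n + 1), (-1 : ℝ) ^ d * (n.choose d) := by
    push_cast
    rfl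
  rw [← h2, h1]
  split <;> simp

lemma inner_sum (p q : ℕ) (hq : q ≤ p) :
    ∑ j ∈ range (p + 1), (-1 : ℝ) ^ j * (p.choose j) * (j.choose q)
      = if q = p then (-1 : ℝ) ^ p else 0 := by
  set F : ℕ → ℝ := fun j => (-1 : ℝ) ^ j * (p.choose j) * (j.choose q) with hF
  have hsplit : ∑ j ∈ Ico 0 q, F j + ∑ j ∈ Ico q (p + 1), F j = ∑ j ∈ Ico 0 (p + 1), F j :=
    Finset.sum_Ico_consecutive F (by omega) (by omega)
  have h0 : ∑ j ∈ Ico 0 q, F j = 0 := by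
    apply Finset.sum_eq_zero
    intro j hj
    have : j < q := (Finset.mem_Ico.mp hj).2
    simp [hF, Nat.choose_eq_zero_of_lt this]
  have hrange : ∑ j ∈ range (p + 1), F j = ∑ j ∈ Ico 0 (p + 1), F j := by
    rw [Finset.range_eq_Ico]
  rw [hrange, ← hsplit, h0, zero_add, Finset.sum_Ico_eq_sum_range]
  have hcnt : p + 1 - q = (p - q) + 1 := by omega
  rw [hcnt]
  have hterm : ∀ d ∈ range ((p - q) + 1),
      F (q + d) = ((-1 : ℝ) ^ q * (p.choose q)) * ((-1 : ℝ) ^ d * ((p - q).choose d)) := by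
    intro d hd
    have hd' : d ≤ p - q := by
      have := Finset.mem_range.mp hd; omega
    have hkn : q + d ≤ p := by omega
    have hmul := Nat.choose_mul (n := p) (Nat.le_add_right q d)
    have hqd : q + d - q = d := by omega
    rw [hqd] at hmul
    have hmul' : ((p.choose (q + d)) : ℝ) * ((q + d).choose q : ℝ)
        = ((p.choose q) : ℝ) * ((p - q).choose d : ℝ) := by
      exact_mod_cast congrArg (Nat.cast : ℕ → ℝ) hmul
    simp only [hF]
    calc (-1 : ℝ) ^ (q + d) * (p.choose (q + d)) * ((q + d).choose q)
        = (-1 : ℝ) ^ q * (-1 : ℝ) ^ d *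
            (((p.choose (q + d)) : ℝ) * ((q + d).choose q : ℝ)) := by
          rw [pow_add]; ring
      _ = ((-1 : ℝ) ^ q * (p.choose q)) * ((-1 : ℝ) ^ d * ((p - q).choose d)) := by
          rw [hmul']; ring
  rw [Finset.sum_congr rfl hterm, ← Finset.mul_sum, alt_sum_choose_real (p - q)]
  by_cases hqp : q = p
  · subst hqp
    simp
  · have : p - q ≠ 0 := by omega
    simp [this, hqp]

lemma binom_inv (a : ℕ → ℝ) (p : ℕ) :
    ∑ j ∈ range (p + 1), (-1 : ℝ) ^ j * (p.choose j) *
      (∑ q ∈ range (j + 1), (-1 : ℝ) ^ q * (j.choose q) * a q) = a p := by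
  have h1 : ∀ j ∈ range (p + 1),
      (-1 : ℝ) ^ j * (p.choose j) * (∑ q ∈ range (j + 1), (-1 : ℝ) ^ q * (j.choose q) * a q)
        = ∑ q ∈ range (p + 1), (-1 : ℝ) ^ j * (p.choose j) * ((-1 : ℝ) ^ q * (j.choose q) * a q) := by
    intro j hj
    rw [Finset.mul_sum]
    apply Finset.sum_subset
    · intro q hq
      have h1 := Finset.mem_range.mp hq
      have h2 := Finset.mem_range.mp hj
      exact Finset.mem_range.mpr (by omega)
    · intro q _ hq
      have hlt : j < q := by
        rcases Nat.lt_or_ge q (j + 1) with h | h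
        · exact absurd (Finset.mem_range.mpr h) hq
        · omega
      simp [Nat.choose_eq_zero_of_lt hlt]
  rw [Finset.sum_congr rfl h1, Finset.sum_comm]
  have h2 : ∀ q ∈ range (p + 1),
      ∑ j ∈ range (p + 1), (-1 : ℝ) ^ j * (p.choose j) * ((-1 : ℝ) ^ q * (j.choose q) * a q)
        = ((-1 : ℝ) ^ q * a q) *
            ∑ j ∈ range (p + 1), (-1 : ℝ) ^ j * (p.choose j) * (j.choose q) := by
    intro q _
    rw [Finset.mul_sum]
    exact Finset.sum_congr rfl fun j _ => by ring
  rw [Finset.sum_congr rfl h2]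
  have h3 : ∀ q ∈ range (p + 1),
      ((-1 : ℝ) ^ q * a q) * ∑ j ∈ range (p + 1), (-1 : ℝ) ^ j * (p.choose j) * (j.choose q)
        = if q = p then a p else 0 := by
    intro q hq
    rw [inner_sum p q (by have := Finset.mem_range.mp hq; omega)]
    by_cases h : q = p
    · subst h
      have he : (-1 : ℝ) ^ (q + q) = 1 := Even.neg_one_pow ⟨q, rfl⟩
      simp only [if_pos rfl]
      calc (-1 : ℝ) ^ q * a q * (-1) ^ q = (-1 : ℝ) ^ (q + q) * a q := by
            rw [pow_add]; ring
        _ = a q := by rw [he, one_mul]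
    · simp [h]
  rw [Finset.sum_congr rfl h3, Finset.sum_ite_eq' (range (p + 1)) p (fun _ => a p)]
  simp



lemma rolle_step {n : ℕ} {u : ℝ → ℝ} (hu : Continuous u) (t : Fin (n + 2) → ℝ)
    (ht : StrictMono t) (hz : ∀ p, u (t p) = 0) :
    ∃ t' : Fin (n + 1) → ℝ, StrictMono t' ∧ (∀ p, deriv u (t' p) = 0) ∧
      ∀ p, t' p < t (Fin.last (n + 1)) := by
  have H : ∀ p : Fin (n + 1), ∃ c ∈ Set.Ioo (t p.castSucc) (t p.succ), deriv u c = 0 := by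
    intro p
    exact exists_deriv_eq_zero (ht (Fin.castSucc_lt_succ (i := p))) hu.continuousOn
      ((hz _).trans (hz _).symm)
  choose t' ht' hd' using H
  refine ⟨t', ?_, hd', ?_⟩
  · intro a b hab
    have h1 : t' a < t a.succ := (ht' a).2
    have h2 : t b.castSucc ≤ t' b := le_of_lt (ht' b).1
    have h3 : t a.succ ≤ t b.castSucc := by
      apply ht.monotone
      rw [Fin.le_def]
      simp only [Fin.val_succ, Fin.coe_castSucc]
      exact Fin.lt_def.mp hab
    linarith
  · intro p
    have h1 : t' p < t p.succ := (ht' p).2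
    have h2 : t p.succ ≤ t (Fin.last (n + 1)) := ht.monotone (Fin.le_last _)
    linarith

lemma rolle_iter : ∀ (r c : ℕ) (u : ℝ → ℝ),
    (∀ q, q < r → Differentiable ℝ (iteratedDeriv q u)) →
    ∀ t : Fin (c + r + 1) → ℝ, StrictMono t → (∀ p, u (t p) = 0) →
    ∃ t' : Fin (c + 1) → ℝ, StrictMono t' ∧ (∀ p, iteratedDeriv r u (t' p) = 0) ∧
      (∀ p, t' p ≤ t (Fin.last (c + r))) ∧
      (0 < r → ∀ p, t' p < t (Fin.last (c + r))) := by
  intro r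
  induction r with
  | zero =>
    intro c u _ t ht hz
    exact ⟨t, ht, by simpa using hz, fun p => ht.monotone (Fin.le_last p),
      fun h => absurd h (by omega)⟩
  | succ r ih =>
    intro c u hd t ht hz
    have hcast : (c + 1) + r + 1 = c + (r + 1) + 1 := by omega
    set t0 : Fin ((c + 1) + r + 1) → ℝ := fun p => t (Fin.cast hcast p) with ht0def
    have ht0m : StrictMono t0 := by
      intro a b hab
      have h' : (Fin.cast hcast a).val < (Fin.cast hcast b).val := by
        simpa using Fin.lt_def.mp hab
      exact ht (Fin.lt_def.mpr h')
    obtain ⟨t1, ht1, hz1, hle1, _⟩ :=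
      ih (c + 1) u (fun q hq => hd q (by omega)) t0 ht0m (fun p => hz _)
    obtain ⟨t2, ht2, hz2, hlt2⟩ :=
      rolle_step (hd r (by omega)).continuous t1 ht1 hz1
    have hlast : t0 (Fin.last (c + 1 + r)) = t (Fin.last (c + (r + 1))) := by
      simp only [ht0def]
      congr 1
      ext
      simp only [Fin.coe_cast, Fin.val_last]
      omega
    refine ⟨t2, ht2, fun p => by rw [iteratedDeriv_succ]; exact hz2 p, ?_, fun _ p => ?_⟩
    · intro p
      have h1 := hlt2 p
      have h2 := hle1 (Fin.last (c + 1))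
      rw [hlast] at h2
      exact le_of_lt (lt_of_lt_of_le h1 h2)
    · have h1 := hlt2 p
      have h2 := hle1 (Fin.last (c + 1))
      rw [hlast] at h2
      exact lt_of_lt_of_le h1 h2


lemma exists_top_zero (n i : ℕ) (hi1 : 1 ≤ i) (hin : i ≤ n) (u : ℝ → ℝ)
    (hd : ∀ q, q ≤ n → Differentiable ℝ (iteratedDeriv q u))
    (s : Fin (n + 1) → ℝ) (hs : StrictMono s) (hz : ∀ p, u (s p) = 0)
    (hzi : iteratedDeriv i u (s (Fin.last n)) = 0) :
    ∃ ξ, iteratedDeriv (n + 1) u ξ = 0 := by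
  have hcast : (n - i) + i + 1 = n + 1 := by omega
  set s0 : Fin ((n - i) + i + 1) → ℝ := fun p => s (Fin.cast hcast p) with hs0def
  have hs0m : StrictMono s0 := by
    intro a b hab
    have h' : (Fin.cast hcast a).val < (Fin.cast hcast b).val := by
      simpa using Fin.lt_def.mp hab
    exact hs (Fin.lt_def.mpr h')
  obtain ⟨t, htm, htz, _, hlt⟩ :=
    rolle_iter i (n - i) u (fun q hq => hd q (by omega)) s0 hs0m (fun p => hz _)
  set b : ℝ := s (Fin.last n) with hbdef
  have hlast : s0 (Fin.last ((n - i) + i)) = b := by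
    simp only [hs0def, hbdef]
    congr 1
    ext
    simp only [Fin.coe_cast, Fin.val_last]
    omega
  have hlt' : ∀ p, t p < b := by
    intro p
    have := hlt (by omega) p
    rwa [hlast] at this
  set v : ℝ → ℝ := iteratedDeriv i u with hvdef
  set t3 : Fin ((n - i) + 1 + 1) → ℝ :=
    fun p => if h : (p : ℕ) < (n - i) + 1 then t ⟨(p : ℕ), h⟩ else b with ht3def
  have ht3m : StrictMono t3 := by
    intro a b' hab
    have hab' : (a : ℕ) < (b' : ℕ) := Fin.lt_def.mp hab
    have hb'2 : (b' : ℕ) < (n - i) + 1 + 1 := b'.isLt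
    have ha : (a : ℕ) < (n - i) + 1 := by omega
    by_cases hb : (b' : ℕ) < (n - i) + 1
    · simp only [ht3def, dif_pos ha, dif_pos hb]
      exact htm (show (⟨(a : ℕ), ha⟩ : Fin ((n - i) + 1)) < ⟨(b' : ℕ), hb⟩ from hab')
    · simp only [ht3def, dif_pos ha, dif_neg hb]
      exact hlt' _
  have ht3z : ∀ p, v (t3 p) = 0 := by
    intro p
    by_cases h : (p : ℕ) < (n - i) + 1
    · simp only [ht3def, dif_pos h]
      exact htz _
    · simp only [ht3def, dif_neg h]
      exact hzi
  have hcast2 : 0 + ((n - i) + 1) + 1 = (n - i) + 1 + 1 := by omega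
  set t4 : Fin (0 + ((n - i) + 1) + 1) → ℝ := fun p => t3 (Fin.cast hcast2 p) with ht4def
  have ht4m : StrictMono t4 := by
    intro a b' hab
    have h' : (Fin.cast hcast2 a).val < (Fin.cast hcast2 b').val := by
      simpa using Fin.lt_def.mp hab
    exact ht3m (Fin.lt_def.mpr h')
  have hcomp : ∀ q, iteratedDeriv q v = iteratedDeriv (q + i) u := by
    intro q
    rw [hvdef, iteratedDeriv_eq_iterate, iteratedDeriv_eq_iterate, iteratedDeriv_eq_iterate,
      ← Function.iterate_add_apply]
  have hd2 : ∀ q, q < (n - i) + 1 → Differentiable ℝ (iteratedDeriv q v) := by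
    intro q hq
    rw [hcomp q]
    exact hd (q + i) (by omega)
  obtain ⟨t5, _, hz5, _, _⟩ := rolle_iter ((n - i) + 1) 0 v hd2 t4 ht4m (fun p => ht3z _)
  refine ⟨t5 0, ?_⟩
  have hfin : iteratedDeriv ((n - i) + 1) v = iteratedDeriv (n + 1) u := by
    have hn : (n - i) + 1 + i = n + 1 := by omega
    rw [hcomp ((n - i) + 1), hn]
  rw [← hfin]
  exact hz5 0



lemma hda (S : ℝ[X]) (b T : ℝ) (hT : T ≠ 0) (x : ℝ) :
    HasDerivAt (fun y => S.eval ((y - b) / T)) ((derivative S).eval ((x - b) / T) / T) x := by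
  have h2 : HasDerivAt (fun y : ℝ => (y - b) / T) (1 / T) x :=
    ((hasDerivAt_id x).sub_const b).div_const T
  have h1 := S.hasDerivAt ((x - b) / T)
  have h3 := HasDerivAt.comp x h1 h2
  rw [mul_one_div] at h3
  exact h3

lemma iter_sub (f : ℝ → ℝ) (R : ℝ[X]) (b T : ℝ) (hT : T ≠ 0) :
    ∀ q, (∀ r, r < q → Differentiable ℝ (iteratedDeriv r f)) →
    iteratedDeriv q (fun x => f x - R.eval ((x - b) / T))
      = fun x => iteratedDeriv q f x - ((derivative^[q] R).eval ((x - b) / T)) / T ^ q := by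
  intro q
  induction q with
  | zero => intro _; simp
  | succ q ih =>
    intro hf
    rw [iteratedDeriv_succ, ih (fun r hr => hf r (by omega))]
    funext x
    rw [deriv_fun_sub ((hf q (by omega)) x)
      (((hda (derivative^[q] R) b T hT x).div_const (T ^ q)).differentiableAt)]
    rw [← iteratedDeriv_succ]
    congr 1
    rw [((hda (derivative^[q] R) b T hT x).div_const (T ^ q)).deriv]
    rw [← Function.iterate_succ_apply' derivative q R, div_div, pow_succ,
      mul_comm T (T ^ q)]


lemma wp_top (m : ℕ) :
    (⇑(derivative (R := ℝ)))^[m+1] (wp (m+1)) = 1 := by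
  unfold wp
  rw [iterate_derivative_C_mul]
  set Pr : ℝ[X] := ∏ p ∈ range (m+1), (X + C (p:ℝ)) with hPr
  have hmon : Pr.Monic := monic_prod_of_monic _ _ (fun p _ => monic_X_add_C _)
  have hdeg : Pr.natDegree = m + 1 := by
    rw [hPr, natDegree_prod (range (m+1)) (fun p : ℕ => X + C (p:ℝ))
      (fun p _ => (monic_X_add_C (p:ℝ)).ne_zero)]
    rw [Finset.sum_congr rfl (fun p (_ : p ∈ range (m+1)) => natDegree_X_add_C (p:ℝ))]
    simp
  have hPrtop : (⇑derivative)^[m+1] Pr = C (((m+1).factorial : ℝ)) := by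
    have hle : ((⇑derivative)^[m+1] Pr).natDegree ≤ 0 := by
      have := natDegree_iterate_derivative Pr (m+1)
      omega
    rw [eq_C_of_natDegree_le_zero hle]
    congr 1
    rw [coeff_iterate_derivative]
    simp only [zero_add]
    rw [show Pr.coeff (m+1) = 1 from by rw [← hdeg]; exact hmon.coeff_natDegree]
    rw [Nat.descFactorial_self]
    simp
  rw [hPrtop, ← C_mul, inv_mul_cancel₀ (by positivity : ((m+1).factorial : ℝ) ≠ 0), C_1]

end IRED

open IRED in
theorem stmt11 (m : ℕ) (hm : 1 ≤ m) (M T : ℝ) (hM : 0 ≤ M) (hT : 0 < T) (f : ℝ → ℝ)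
    (hdiff : ∀ i, i ≤ m → Differentiable ℝ (iteratedDeriv i f))
    (hbound : ∀ t : ℝ, |iteratedDeriv (m + 1) f t| ≤ M)
    (g : ℕ → ℤ → ℝ)
    (hg1 : ∀ k : ℤ, g 1 (k + 1) = f ((k : ℝ) * T))
    (hgi : ∀ i : ℕ, 1 ≤ i → i ≤ m + 1 → ∀ k : ℤ,
      g (i + 1) (k + 1) = (g i (k + 1) - g i k) / T) :
    ∀ k : ℕ, m ≤ k → ∀ i, 1 ≤ i → i ≤ m →
      |iteratedDeriv i f ((k : ℝ) * T)
          - ∑ j ∈ Finset.Icc i m, T ^ (j - i) * ired_c i j * g (j + 1) ((k : ℤ) + 1)|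
        ≤ ired_c i (m + 1) * M * T ^ (m + 1 - i) := by
  intro k hk i hi1 him
  have hTne : T ≠ 0 := ne_of_gt hT
  set K : ℤ := (k : ℤ) with hK
  set A : ℤ → ℝ := fun z => f ((z : ℝ) * T) with hA
  -- explicit formula for the divided differences
  have gform : ∀ j, j ≤ m → ∀ K' : ℤ, g (j + 1) (K' + 1) * T ^ j
      = ∑ q ∈ Finset.range (j + 1), (-1 : ℝ) ^ q * (j.choose q) * A (K' - q) := by
    intro j
    induction j with
    | zero =>
      intro _ K'
      simp [hg1 K', hA]
    | succ j ihj =>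
      intro hj K'
      have hrec := hgi (j + 1) (by omega) (by omega) K'
      have h1 := ihj (by omega) K'
      have h2 := ihj (by omega) (K' - 1)
      have h3 : g (j + 1) ((K' - 1) + 1) = g (j + 1) K' := by norm_num
      rw [h3] at h2
      have hL : g (j + 1 + 1) (K' + 1) * T ^ (j + 1)
          = g (j + 1) (K' + 1) * T ^ j - g (j + 1) K' * T ^ j := by
        rw [hrec, pow_succ]
        field_simp
      rw [hL, h1, h2]
      set f' : ℕ → ℝ := fun q => (-1 : ℝ) ^ q * (j.choose q) * A (K' - q) with hf'
      set hfun : ℕ → ℝ := fun r => (-1 : ℝ) ^ r * (j.choose r) * A ((K' - 1) - r) with hh'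
      set F : ℕ → ℝ := fun q => (-1 : ℝ) ^ q * ((j+1).choose q) * A (K' - q) with hF
      show ∑ q ∈ Finset.range (j + 1), f' q - ∑ q ∈ Finset.range (j + 1), hfun q
          = ∑ q ∈ Finset.range (j + 1 + 1), F q
      have e1 := Finset.sum_range_succ' F (j + 1)
      have hsp : ∀ r ∈ Finset.range (j + 1), F (r + 1) = f' (r + 1) - hfun r := by
        intro r _
        have hc : (((j+1).choose (r+1) : ℕ) : ℝ) = (j.choose r : ℝ) + (j.choose (r+1) : ℝ) := by
          rw [Nat.choose_succ_succ]
          push_cast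
          ring
        have hAe : A (K' - ((r + 1 : ℕ) : ℤ)) = A ((K' - 1) - r) := by
          congr 1
          push_cast
          ring
        simp only [hF, hf', hh']
        rw [hc, hAe, pow_succ]
        ring
      have e2 := Finset.sum_range_succ' f' (j + 1)
      have e3 := Finset.sum_range_succ f' (j + 1)
      have hz : f' (j + 1) = 0 := by
        simp only [hf']
        rw [Nat.choose_succ_self]
        simp
      have hF0 : F 0 = f' 0 := by
        simp only [hF, hf']
        norm_num
      rw [e1, Finset.sum_congr rfl hsp, Finset.sum_sub_distrib, hF0]
      rw [hz, add_zero] at e3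
      rw [e3] at e2
      linarith [e2]
  -- the Newton-form interpolation polynomial
  set Dg : ℕ → ℝ := fun j => g (j + 1) (K + 1) * T ^ j with hDg
  set Q : ℝ[X] := ∑ j ∈ Finset.range (m + 1), C (Dg j) * wp j with hQ
  have hinterp : ∀ p' : ℕ, p' ≤ m → Q.eval (-(p' : ℝ)) = A (K - p') := by
    intro p' hp'
    rw [hQ, eval_finset_sum]
    simp only [eval_mul, eval_C]
    have hsub : ∑ j ∈ Finset.range (m + 1), Dg j * (wp j).eval (-(p' : ℝ))
        = ∑ j ∈ Finset.range (p' + 1), Dg j * (wp j).eval (-(p' : ℝ)) := by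
      symm
      apply Finset.sum_subset (Finset.range_subset_range.mpr (by omega))
      intro j hj hj2
      have hlt : p' < j := by
        have := Finset.mem_range.mp hj
        rcases Nat.lt_or_ge p' j with h | h
        · exact h
        · exact absurd (Finset.mem_range.mpr (by omega)) hj2
      rw [wp_eval_neg_of_lt hlt, mul_zero]
    rw [hsub]
    have hterm : ∀ j ∈ Finset.range (p' + 1), Dg j * (wp j).eval (-(p' : ℝ))
        = (-1 : ℝ) ^ j * (p'.choose j) *
            (∑ q ∈ Finset.range (j + 1), (-1 : ℝ) ^ q * (j.choose q) * A (K - q)) := by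
      intro j hj
      have hj' : j ≤ p' := by
        have := Finset.mem_range.mp hj
        omega
      rw [wp_eval_neg_of_le hj']
      simp only [hDg]
      rw [gform j (by omega) K]
      ring
    rw [Finset.sum_congr rfl hterm]
    exact binom_inv (fun q => A (K - q)) p'
  -- setup of the auxiliary function
  set x0 : ℝ := (k : ℝ) * T with hx0
  set E : ℝ := iteratedDeriv i f x0
      - ∑ j ∈ Finset.Icc i m, T ^ (j - i) * ired_c i j * g (j + 1) (K + 1) with hE
  show |E| ≤ ired_c i (m + 1) * M * T ^ (m + 1 - i)
  have hcpos : 0 < ired_c i (m + 1) := ired_c_pos (m + 1) i hi1 (by omega)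
  have hcne : ired_c i (m + 1) ≠ 0 := ne_of_gt hcpos
  set μ : ℝ := E * T ^ i / ired_c i (m + 1) with hμ
  set Rp : ℝ[X] := Q + C μ * wp (m + 1) with hRp
  set h : ℝ → ℝ := fun x => f x - Rp.eval ((x - x0) / T) with hh
  have hiter : ∀ q, q ≤ m + 1 → iteratedDeriv q h
      = fun x => iteratedDeriv q f x - (((⇑derivative)^[q] Rp).eval ((x - x0) / T)) / T ^ q :=
    fun q hq => iter_sub f Rp x0 T hTne q (fun r hr => hdiff r (by omega))
  have hdiffh : ∀ q, q ≤ m → Differentiable ℝ (iteratedDeriv q h) := by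
    intro q hq
    rw [hiter q (by omega)]
    exact (hdiff q hq).sub
      (fun x => (((hda ((⇑derivative)^[q] Rp) x0 T hTne x).div_const (T ^ q)).differentiableAt))
  -- the interpolation nodes
  set sp : Fin (m + 1) → ℝ := fun p => ((k : ℝ) - (m : ℝ) + ((p : ℕ) : ℝ)) * T with hsp
  have hspm : StrictMono sp := by
    intro a b hab
    have h1 : ((a : ℕ) : ℝ) < ((b : ℕ) : ℝ) := by
      exact_mod_cast Fin.lt_def.mp hab
    simp only [hsp]
    have := hT
    nlinarith
  have hsplast : sp (Fin.last m) = x0 := by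
    simp only [hsp, hx0, Fin.val_last]
    ring
  have hnode : ∀ p : Fin (m + 1), h (sp p) = 0 := by
    intro p
    have hple : (p : ℕ) ≤ m := by
      have := p.isLt
      omega
    have harg : (sp p - x0) / T = -(((m - (p : ℕ) : ℕ)) : ℝ) := by
      simp only [hsp, hx0]
      rw [Nat.cast_sub hple]
      field_simp
      ring
    simp only [hh]
    rw [harg, hRp, eval_add, eval_mul, eval_C,
      wp_eval_neg_of_lt (show m - (p : ℕ) < m + 1 by omega), mul_zero, add_zero,
      hinterp (m - (p : ℕ)) (by omega)]
    have hfsp : f (sp p) = A (K - ((m - (p : ℕ) : ℕ) : ℤ)) := by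
      simp only [hA]
      congr 1
      simp only [hsp]
      congr 1
      rw [hK]
      push_cast [Nat.cast_sub hple]
      ring
    rw [hfsp, sub_self]
  -- sum over Icc in terms of the full sum
  set S : ℝ := ∑ j ∈ Finset.range (m + 1), Dg j * ired_c i j with hS
  have hSIcc : ∑ j ∈ Finset.Icc i m, T ^ (j - i) * ired_c i j * g (j + 1) (K + 1)
      = S / T ^ i := by
    rw [hS]
    have hzero : ∀ j ∈ Finset.range (m + 1), j ∉ Finset.Icc i m → Dg j * ired_c i j = 0 := by
      intro j hj hj2
      have hjm : j < m + 1 := Finset.mem_range.mp hj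
      have hji : j < i := by
        rcases Nat.lt_or_ge j i with hlt | hge
        · exact hlt
        · exact absurd (Finset.mem_Icc.mpr ⟨hge, by omega⟩) hj2
      rw [ired_c_zero_of_lt hji, mul_zero]
    have hcc : ∑ j ∈ Finset.Icc i m, Dg j * ired_c i j
        = ∑ j ∈ Finset.range (m + 1), Dg j * ired_c i j :=
      Finset.sum_subset (fun j hj => Finset.mem_range.mpr (by
        have := Finset.mem_Icc.mp hj
        omega)) hzero
    rw [← hcc, Finset.sum_div]
    apply Finset.sum_congr rfl
    intro j hj
    have hij : i ≤ j ∧ j ≤ m := Finset.mem_Icc.mp hj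
    have hTj : T ^ (j - i) = T ^ j / T ^ i := by
      rw [eq_div_iff (pow_ne_zero _ hTne), ← pow_add]
      congr 1
      omega
    rw [hTj]
    simp only [hDg]
    ring
  -- evaluation of the i-th derivative of Rp at 0
  have hder_eval : (((⇑derivative)^[i] Rp)).eval 0 = S + μ * ired_c i (m + 1) := by
    rw [hRp]
    have hadd : (⇑derivative)^[i] (Q + C μ * wp (m + 1))
        = (⇑derivative)^[i] Q + (⇑derivative)^[i] (C μ * wp (m + 1)) := by
      simp only [← Module.End.pow_apply, map_add]
    rw [hadd, eval_add, iterate_derivative_C_mul, eval_mul, eval_C, eval_iter_wp]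
    congr 1
    rw [hQ, iterate_derivative_sum, eval_finset_sum, hS]
    apply Finset.sum_congr rfl
    intro j _
    rw [iterate_derivative_C_mul, eval_mul, eval_C, eval_iter_wp]
  -- the i-th derivative of h vanishes at x0
  have hhi : iteratedDeriv i h x0 = 0 := by
    rw [hiter i (by omega)]
    simp only
    rw [show (x0 - x0) / T = 0 by rw [sub_self, zero_div], hder_eval]
    have hm1 : μ * ired_c i (m + 1) = E * T ^ i := by
      rw [hμ]
      field_simp
    have hm2 : E = iteratedDeriv i f x0 - S / T ^ i := by
      rw [hE, hSIcc]
    rw [hm1]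
    have hTi : (T : ℝ) ^ i ≠ 0 := pow_ne_zero _ hTne
    field_simp at hm2 ⊢
    linarith
  -- apply the Rolle argument
  obtain ⟨ξ, hξ⟩ := exists_top_zero m i hi1 him h hdiffh sp hspm hnode
    (by rw [hsplast]; exact hhi)
  -- top derivative of Rp
  have hQdeg : Q.natDegree ≤ m := by
    rw [hQ]
    exact natDegree_sum_le_of_forall_le (Finset.range (m + 1)) _ (fun j hj =>
      le_trans (natDegree_C_mul_le _ _) (le_trans (wp_natDegree_le j)
        (by have := Finset.mem_range.mp hj; omega)))
  have htop : (⇑derivative)^[m + 1] Rp = C μ := by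
    rw [hRp]
    have hadd : (⇑derivative)^[m + 1] (Q + C μ * wp (m + 1))
        = (⇑derivative)^[m + 1] Q + (⇑derivative)^[m + 1] (C μ * wp (m + 1)) := by
      simp only [← Module.End.pow_apply, map_add]
    rw [hadd, iterate_derivative_eq_zero (by omega : Q.natDegree < m + 1), zero_add,
      iterate_derivative_C_mul, wp_top, mul_one]
  -- conclude
  have hμval : μ = iteratedDeriv (m + 1) f ξ * T ^ (m + 1) := by
    have h5 := hiter (m + 1) le_rfl
    have h6 : iteratedDeriv (m + 1) h ξ = 0 := hξ
    rw [h5] at h6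
    simp only at h6
    rw [htop, eval_C] at h6
    have hTm : (T : ℝ) ^ (m + 1) ≠ 0 := pow_ne_zero _ hTne
    field_simp at h6
    linarith
  have hEval : E = iteratedDeriv (m + 1) f ξ * (T ^ (m + 1) * ired_c i (m + 1) / T ^ i) := by
    have : E = μ * ired_c i (m + 1) / T ^ i := by
      rw [hμ]
      field_simp
    rw [this, hμval]
    ring
  have hfac : T ^ (m + 1) * ired_c i (m + 1) / T ^ i = ired_c i (m + 1) * T ^ (m + 1 - i) := by
    rw [pow_sub₀ T hTne (by omega : i ≤ m + 1)]
    field_simp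
  have hfacpos : 0 ≤ ired_c i (m + 1) * T ^ (m + 1 - i) := by positivity
  rw [hEval, hfac, abs_mul, abs_of_nonneg hfacpos]
  calc |iteratedDeriv (m + 1) f ξ| * (ired_c i (m + 1) * T ^ (m + 1 - i))
      ≤ M * (ired_c i (m + 1) * T ^ (m + 1 - i)) :=
        mul_le_mul_of_nonneg_right (hbound ξ) hfacpos
    _ = ired_c i (m + 1) * M * T ^ (m + 1 - i) := by ring
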